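/- Let K₂ < K₁ and a < K₁ be reals, and let f, g : [a, K₁] → ℝ be continuous with f strictly decreasing, g strictly increasing, f(x) < x < g(x) for all x ∈ [a, K₁], g(a) = K₁ and f(K₁) < K₂. Define Λ(x) = (g(x) − K₁)/(g(x) − x) − (K₁ − K₂)/(x − f(x)). Then there exists a unique x* ∈ (a, K₁) with Λ(x*) = 0; moreover f(x*) < K₂ and (K₂ − f(x*))/(g(x*) − f(x*)) = (K₁ − x*)/(g(x*) − x*) = 1 − (K₁ − K₂)/(x* − f(x*)). -/
import Mathlib


/-- Existence and uniqueness of the root `x*` of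
`Λ(x) = (g(x)-K₁)/(g(x)-x) - (K₁-K₂)/(x-f(x))` on `(a, K₁)`, together with the
identities satisfied at the root. -/
theorem unique_root_of_Lambda
    (K₁ K₂ a : ℝ) (hK : K₂ < K₁) (ha : a < K₁)
    (f g : ℝ → ℝ)
    (hfc : ContinuousOn f (Set.Icc a K₁)) (hgc : ContinuousOn g (Set.Icc a K₁))
    (hfa : StrictAntiOn f (Set.Icc a K₁)) (hgm : StrictMonoOn g (Set.Icc a K₁))
    (hfg : ∀ x ∈ Set.Icc a K₁, f x < x ∧ x < g x)
    (hga : g a = K₁) (hfK : f K₁ < K₂) :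
    (∃! xs : ℝ, xs ∈ Set.Ioo a K₁ ∧
        (g xs - K₁) / (g xs - xs) - (K₁ - K₂) / (xs - f xs) = 0) ∧
    (∀ xs ∈ Set.Ioo a K₁,
      (g xs - K₁) / (g xs - xs) - (K₁ - K₂) / (xs - f xs) = 0 →
      f xs < K₂ ∧
      (K₂ - f xs) / (g xs - f xs) = (K₁ - xs) / (g xs - xs) ∧
      (K₁ - xs) / (g xs - xs) = 1 - (K₁ - K₂) / (xs - f xs)) := by
  set Λ : ℝ → ℝ := fun x => (g x - K₁) / (g x - x) - (K₁ - K₂) / (x - f x) with hΛdef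
  have haK : a ∈ Set.Icc a K₁ := ⟨le_refl a, ha.le⟩
  have hKK : K₁ ∈ Set.Icc a K₁ := ⟨ha.le, le_refl K₁⟩
  have hd1 : ∀ x ∈ Set.Icc a K₁, 0 < g x - x := fun x hx => sub_pos.mpr (hfg x hx).2
  have hd2 : ∀ x ∈ Set.Icc a K₁, 0 < x - f x := fun x hx => sub_pos.mpr (hfg x hx).1
  have hgK : ∀ x ∈ Set.Icc a K₁, a < x → K₁ < g x := by
    intro x hx hax
    rw [← hga]; exact hgm haK hx hax
  have hΛc : ContinuousOn Λ (Set.Icc a K₁) := by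
    apply ContinuousOn.sub
    · exact (hgc.sub continuousOn_const).div (hgc.sub continuousOn_id)
        (fun x hx => (hd1 x hx).ne')
    · exact ContinuousOn.div continuousOn_const (continuousOn_id.sub hfc)
        (fun x hx => (hd2 x hx).ne')
  have hmono : StrictMonoOn Λ (Set.Icc a K₁) := by
    intro x hx y hy hxy
    have hay : a < y := lt_of_le_of_lt hx.1 hxy
    have hgxK : K₁ ≤ g x := by
      rcases eq_or_lt_of_le hx.1 with h | h
      · rw [← h, hga]
      · exact (hgK x hx h).le
    have hgxy : g x < g y := hgm hx hy hxy
    have hfxy : f y < f x := hfa hx hy hxy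
    have d1x := hd1 x hx; have d1y := hd1 y hy
    have d2x := hd2 x hx; have d2y := hd2 y hy
    have h1 : (g x - K₁) / (g x - x) ≤ (g y - K₁) / (g y - y) := by
      rw [div_le_div_iff₀ d1x d1y]
      nlinarith [mul_nonneg (sub_nonneg.mpr hgxy.le) (sub_nonneg.mpr hx.2),
        mul_nonneg (sub_nonneg.mpr hgxK) (sub_nonneg.mpr hxy.le), hy.2]
    have h2 : (K₁ - K₂) / (y - f y) < (K₁ - K₂) / (x - f x) :=
      div_lt_div_of_pos_left (by linarith) d2x (by linarith)
    simp only [hΛdef]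
    linarith
  have hΛa : Λ a < 0 := by
    have hp : 0 < (K₁ - K₂) / (a - f a) := div_pos (by linarith) (hd2 a haK)
    have hval : Λ a = 0 - (K₁ - K₂) / (a - f a) := by
      simp [hΛdef, hga]
    rw [hval]; linarith
  have hΛK : 0 < Λ K₁ := by
    have h1 : (g K₁ - K₁) / (g K₁ - K₁) = 1 := div_self (hd1 K₁ hKK).ne'
    have h2 : (K₁ - K₂) / (K₁ - f K₁) < 1 := by
      rw [div_lt_one (hd2 K₁ hKK)]; linarith
    simp only [hΛdef]; rw [h1]; linarith
  obtain ⟨xs, hxsI, hΛxs⟩ : (0 : ℝ) ∈ Λ '' Set.Icc a K₁ :=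
    intermediate_value_Icc ha.le hΛc ⟨hΛa.le, hΛK.le⟩
  have hxsIoo : xs ∈ Set.Ioo a K₁ := by
    constructor
    · rcases eq_or_lt_of_le hxsI.1 with h | h
      · exfalso; rw [← h] at hΛxs; linarith
      · exact h
    · rcases eq_or_lt_of_le hxsI.2 with h | h
      · exfalso; rw [h] at hΛxs; linarith
      · exact h
  constructor
  · refine ⟨xs, ⟨hxsIoo, hΛxs⟩, ?_⟩
    intro y ⟨hyI, hΛy⟩
    exact hmono.injOn (Set.Ioo_subset_Icc_self hyI) hxsI (hΛy.trans hΛxs.symm)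
  · intro z hz hΛz
    have hzI : z ∈ Set.Icc a K₁ := Set.Ioo_subset_Icc_self hz
    have d1 := hd1 z hzI
    have d2 := hd2 z hzI
    have hgzK : K₁ < g z := hgK z hzI hz.1
    have hgf : 0 < g z - f z := by linarith [(hfg z hzI).1, (hfg z hzI).2]
    have heq : (g z - K₁) / (g z - z) = (K₁ - K₂) / (z - f z) := by linarith
    have E : (g z - K₁) * (z - f z) = (K₁ - K₂) * (g z - z) :=
      (div_eq_div_iff d1.ne' d2.ne').mp heq
    have hKd : K₁ - K₂ < z - f z := by
      nlinarith [E, mul_pos d2 (sub_pos.mpr hz.2), d1]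
    have hfz : f z < K₂ := by linarith [hz.2]
    refine ⟨hfz, ?_, ?_⟩
    · rw [div_eq_div_iff hgf.ne' d1.ne']
      linear_combination E
    · rw [eq_sub_iff_add_eq, div_add_div _ _ d1.ne' d2.ne', div_eq_one_iff_eq
        (by positivity : (g z - z) * (z - f z) ≠ 0)]
      linear_combination -E
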